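/- arXiv:1712.03308 — 2 statements merged into one kernel-verified Lean document; each statement's English description precedes it below -/
import Mathlib

section
/- Let J be an interval partition such that for each n, |J_n| = 2^{l_n} with l_n > 0 and l_n ≥ n, let Ā be a tree system for J, let f ∈ F_{J,Ā}, and let I be any interval partition. Then the set Z_{I,J,f} has asymptotic density zero. -/
open Filter Set Cardinal

/-- A set of naturals has asymptotic density zero. -/
def DensityZero (A : Set ℕ) : Prop :=
  Tendsto (fun n : ℕ => ((A ∩ Set.Iio n).ncard : ℝ) / n) atTop (nhds 0)

/-- An interval partition is a strictly increasing `I : ℕ → ℕ` with `I 0 = 0`;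
the `n`-th interval is `[I n, I (n+1))`. -/
def IsIntervalPartition (I : ℕ → ℕ) : Prop := I 0 = 0 ∧ StrictMono I

/-- A tree system `Ā = ⟨A_{n,σ}⟩` for an interval partition `J` whose `n`-th interval has
size `2^{l n}`: for each `n`, the sets `A_{n,σ}` for `σ` of length `m ≤ l n` partition
`J_n`, have sizes `2^{l n - |σ|}`, are decreasing along extensions of `σ`, and distinct
elements of `A_{n,σ}` are more than `2^{|σ| - 1}` apart. -/
def TreeSystem (J : ℕ → ℕ) (l : ℕ → ℕ) (A : ℕ → List Bool → Set ℕ) : Prop :=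
  ∀ n : ℕ,
    (∀ m ≤ l n,
      (⋃ σ ∈ {s : List Bool | s.length = m}, A n σ) = Set.Ico (J n) (J (n + 1)) ∧
      (∀ σ τ : List Bool, σ.length = m → τ.length = m → σ ≠ τ →
        Disjoint (A n σ) (A n τ))) ∧
    (∀ σ : List Bool, σ.length ≤ l n → (A n σ).ncard = 2 ^ (l n - σ.length)) ∧
    (∀ σ τ : List Bool, τ.length ≤ l n → σ <+: τ → A n τ ⊆ A n σ) ∧
    (∀ σ : List Bool, σ.length ≤ l n → ∀ i ∈ A n σ, ∀ j ∈ A n σ, i ≠ j →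
      (2 : ℝ) ^ ((σ.length : ℤ) - 1) < |(i : ℝ) - (j : ℝ)|)

/-- `f ∈ F_{J,Ā}`: for each `n` and each `m < l n` the fiber `f⁻¹({m}) ∩ J_n` is one of
the sets `A_{n,σ}` with `|σ| = m + 1`, and the fiber `f⁻¹({l n}) ∩ J_n` is some `A_{n,τ}`
with `|τ| = l n`. -/
def MemFJA (J : ℕ → ℕ) (l : ℕ → ℕ) (A : ℕ → List Bool → Set ℕ) (f : ℕ → ℕ) : Prop :=
  ∀ n : ℕ,
    (∀ m < l n, ∃ σ : List Bool, σ.length = m + 1 ∧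
      f ⁻¹' {m} ∩ Set.Ico (J n) (J (n + 1)) = A n σ) ∧
    (∃ τ : List Bool, τ.length = l n ∧
      f ⁻¹' {l n} ∩ Set.Ico (J n) (J (n + 1)) = A n τ)

/-- `Z_{I,J,f} = ⋃_l Z_{I,J,f,l}` where
`Z_{I,J,f,l} = {m : ∃ k ∈ I_l, m ∈ J_k ∧ f m ≥ l}`. -/
def ZSet (I J : ℕ → ℕ) (f : ℕ → ℕ) : Set ℕ :=
  ⋃ l : ℕ, {m : ℕ | ∃ k ∈ Set.Ico (I l) (I (l + 1)),
    m ∈ Set.Ico (J k) (J (k + 1)) ∧ l ≤ f m}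

lemma ncard_Iio (n : ℕ) : (Set.Iio n).ncard = n := by
  rw [show Set.Iio n = ↑(Finset.range n) by ext x; simp, Set.ncard_coe_finset, Finset.card_range]

lemma ncard_biUnion_le (F : Finset ℕ) (g : ℕ → Set ℕ) :
    (⋃ j ∈ F, g j).ncard ≤ ∑ j ∈ F, (g j).ncard := by
  classical
  induction F using Finset.induction_on with
  | empty => simp
  | @insert a F ha ih =>
    rw [Finset.set_biUnion_insert, Finset.sum_insert ha]
    exact le_trans (Set.ncard_union_le _ _) (by omega)

lemma count_sep (S : Set ℕ) (a b D : ℕ) (hD : 0 < D) (hsub : S ⊆ Set.Ico a b)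
    (hsep : ∀ i ∈ S, ∀ j ∈ S, i < j → D ≤ j - i) :
    S.ncard ≤ (b - a) / D + 1 := by
  have hmono : ∀ x ∈ S, ∀ y ∈ S, x < y → (x - a) / D < (y - a) / D := by
    intro x hx y hy hxy
    have h1 := hsep x hx y hy hxy
    have hax : a ≤ x := (hsub hx).1
    have h2 : (x - a) + D ≤ y - a := by omega
    calc (x-a)/D < (x-a)/D + 1 := Nat.lt_succ_self _
      _ = ((x-a) + D)/D := (Nat.add_div_right _ hD).symm
      _ ≤ (y - a)/D := Nat.div_le_div_right h2
  have hinj : Set.InjOn (fun x => (x - a)/D) S := by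
    intro x hx y hy hxy
    rcases lt_trichotomy x y with h | h | h
    · exact absurd hxy (hmono x hx y hy h).ne
    · exact h
    · exact absurd hxy.symm (hmono y hy x hx h).ne
  calc S.ncard = ((fun x => (x - a)/D) '' S).ncard := (Set.ncard_image_of_injOn hinj).symm
    _ ≤ (Set.Iio ((b - a)/D + 1)).ncard := by
        apply Set.ncard_le_ncard _ (Set.finite_Iio _)
        rintro _ ⟨x, hx, rfl⟩
        have h1 : x < b := (hsub hx).2
        have h2 : a ≤ x := (hsub hx).1
        simp only [Set.mem_Iio]
        have : (x - a)/D ≤ (b-a)/D := Nat.div_le_div_right (by omega)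
        omega
    _ = (b - a)/D + 1 := ncard_Iio _

/-- index of the interval of `I` containing `k` -/
def idx (I : ℕ → ℕ) (k : ℕ) : ℕ := Nat.findGreatest (fun j => I j ≤ k) k

lemma idx_le (I : ℕ → ℕ) (k : ℕ) : idx I k ≤ k := Nat.findGreatest_le k

lemma I_idx_le (I : ℕ → ℕ) (hI : IsIntervalPartition I) (k : ℕ) : I (idx I k) ≤ k :=
  Nat.findGreatest_spec (P := fun j => I j ≤ k) (Nat.zero_le k) (show I 0 ≤ k by rw [hI.1]; exact Nat.zero_le k)

lemma le_idx (I : ℕ → ℕ) (hI : IsIntervalPartition I) {L k : ℕ} (h : I L ≤ k) : L ≤ idx I k :=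
  Nat.le_findGreatest (le_trans hI.2.le_apply h) h

lemma lt_I_idx_succ (I : ℕ → ℕ) (hI : IsIntervalPartition I) (k : ℕ) : k < I (idx I k + 1) := by
  by_contra h
  push_neg at h
  have h2 : idx I k + 1 ≤ I (idx I k + 1) := hI.2.le_apply
  have h3 : idx I k + 1 ≤ idx I k := Nat.le_findGreatest (by omega) h
  omega

lemma A_nil (J : ℕ → ℕ) (l : ℕ → ℕ) (A : ℕ → List Bool → Set ℕ) (hA : TreeSystem J l A)
    (k : ℕ) : A k [] = Set.Ico (J k) (J (k + 1)) := by
  have h3 := ((hA k).1 0 (Nat.zero_le _)).1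
  rw [← h3]
  rw [show {s : List Bool | s.length = 0} = {([] : List Bool)} by ext s; simp [List.length_eq_zero_iff]]
  simp

lemma A_subset_Ico (J : ℕ → ℕ) (l : ℕ → ℕ) (A : ℕ → List Bool → Set ℕ) (hA : TreeSystem J l A)
    (k : ℕ) (τ : List Bool) (h : τ.length ≤ l k) : A k τ ⊆ Set.Ico (J k) (J (k + 1)) := by
  rw [← A_nil J l A hA k]
  exact (hA k).2.2.1 [] τ h List.nil_prefix

lemma nested (J : ℕ → ℕ) (l : ℕ → ℕ) (A : ℕ → List Bool → Set ℕ)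
    (hA : TreeSystem J l A) (f : ℕ → ℕ) (hf : MemFJA J l A f)
    (k t : ℕ) (ht : t ≤ l k) :
    ∃ ρ : List Bool, ρ.length = t ∧
      {m : ℕ | m ∈ Set.Ico (J k) (J (k+1)) ∧ t ≤ f m} ⊆ A k ρ := by
  induction t with
  | zero =>
    refine ⟨[], rfl, ?_⟩
    rw [A_nil J l A hA k]
    exact fun m hm => hm.1
  | succ t ih =>
    have ht' : t ≤ l k := by omega
    have htlt : t < l k := by omega
    obtain ⟨ρ, hρlen, hρ⟩ := ih ht'
    obtain ⟨σ, hσlen, hσ⟩ := (hf k).1 t htlt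
    -- A k σ ⊆ A k ρ
    have hAσρ : A k σ ⊆ A k ρ := by
      intro m hm
      rw [← hσ] at hm
      exact hρ ⟨hm.2, by have := hm.1; simp only [Set.mem_preimage, Set.mem_singleton_iff] at this; omega⟩
    have hne : (A k σ).Nonempty := by
      apply Set.nonempty_of_ncard_ne_zero
      rw [(hA k).2.1 σ (by omega)]
      positivity
    -- σ.take t = ρ
    have htake : σ.take t = ρ := by
      by_contra hcon
      have hlen2 : (σ.take t).length = t := by rw [List.length_take]; omega
      have hsub2 : A k σ ⊆ A k (σ.take t) := (hA k).2.2.1 _ σ (by omega) (List.take_prefix _ _)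
      have hdisj := ((hA k).1 t ht').2 (σ.take t) ρ hlen2 hρlen hcon
      obtain ⟨x, hx⟩ := hne
      exact hdisj.ne_of_mem (hsub2 hx) (hAσρ hx) rfl
    obtain ⟨b, hb⟩ : ∃ b, σ.drop t = [b] :=
      List.length_eq_one_iff.mp (by rw [List.length_drop]; omega)
    have hσeq : σ = ρ ++ [b] := by
      conv_lhs => rw [← List.take_append_drop t σ]
      rw [htake, hb]
    -- children cover A k ρ
    have hlenb : (ρ ++ [b]).length = t + 1 := by simp [hρlen]
    have hlennb : (ρ ++ [!b]).length = t + 1 := by simp [hρlen]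
    have hXsub : A k (ρ ++ [b]) ⊆ A k ρ := (hA k).2.2.1 ρ _ (by omega) (List.prefix_append _ _)
    have hYsub : A k (ρ ++ [!b]) ⊆ A k ρ := (hA k).2.2.1 ρ _ (by omega) (List.prefix_append _ _)
    have hdisj : Disjoint (A k (ρ ++ [b])) (A k (ρ ++ [!b])) :=
      ((hA k).1 (t+1) (by omega)).2 _ _ hlenb hlennb (by simp)
    have hfinρ : (A k ρ).Finite :=
      (Set.finite_Ico _ _).subset (A_subset_Ico J l A hA k ρ (by omega))
    have hcover : A k (ρ ++ [b]) ∪ A k (ρ ++ [!b]) = A k ρ := by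
      apply Set.eq_of_subset_of_ncard_le (Set.union_subset hXsub hYsub) _ hfinρ
      rw [Set.ncard_union_eq hdisj (hfinρ.subset hXsub) (hfinρ.subset hYsub),
        (hA k).2.1 _ (by omega : (ρ ++ [b]).length ≤ l k),
        (hA k).2.1 _ (by omega : (ρ ++ [!b]).length ≤ l k),
        (hA k).2.1 ρ (by omega)]
      rw [hlenb, hlennb, hρlen]
      have h5 : l k - t = (l k - (t+1)) + 1 := by omega
      rw [h5, pow_succ]
      omega
    refine ⟨ρ ++ [!b], hlennb, ?_⟩
    intro m hm
    have hmρ : m ∈ A k ρ := hρ ⟨hm.1, by have h6 := hm.2; omega⟩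
    rw [← hcover] at hmρ
    rcases hmρ with hmb | hmnb
    · exfalso
      rw [← hσeq, ← hσ] at hmb
      have h1 := hmb.1
      simp only [Set.mem_preimage, Set.mem_singleton_iff] at h1
      have h2 := hm.2
      omega
    · exact hmnb

lemma Z_inter (I J : ℕ → ℕ) (f : ℕ → ℕ) (hI : IsIntervalPartition I) (hJ : IsIntervalPartition J)
    (k : ℕ) {m : ℕ} (hm : m ∈ ZSet I J f ∩ Set.Ico (J k) (J (k + 1))) :
    m ∈ Set.Ico (J k) (J (k+1)) ∧ idx I k ≤ f m := by
  obtain ⟨hmZ, hmk⟩ := hm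
  refine ⟨hmk, ?_⟩
  simp only [ZSet, Set.mem_iUnion, Set.mem_setOf_eq] at hmZ
  obtain ⟨l0, k', hk', hm', hlf⟩ := hmZ
  have hkk : k' = k := by
    rcases lt_trichotomy k' k with h | h | h
    · have := hJ.2.monotone (show k' + 1 ≤ k by omega)
      rw [Set.mem_Ico] at hm' hmk
      omega
    · exact h
    · have := hJ.2.monotone (show k + 1 ≤ k' by omega)
      rw [Set.mem_Ico] at hm' hmk
      omega
  subst hkk
  rw [Set.mem_Ico] at hk'
  have h1 : I (idx I k') ≤ k' := I_idx_le I hI k'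
  have h2 : idx I k' < l0 + 1 := by
    by_contra hcon
    push_neg at hcon
    have := hI.2.monotone (show l0 + 1 ≤ idx I k' by omega)
    omega
  omega


/-- Lemma: for any interval partitions `I`, `J`, tree system `Ā` for `J`, and
`f ∈ F_{J,Ā}`, the set `Z_{I,J,f}` has asymptotic density zero. -/
theorem stmt13 (J : ℕ → ℕ) (hJ : IsIntervalPartition J) (l : ℕ → ℕ)
    (hl : ∀ n : ℕ, 0 < l n ∧ n ≤ l n ∧ J (n + 1) - J n = 2 ^ l n)
    (A : ℕ → List Bool → Set ℕ) (hA : TreeSystem J l A)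
    (f : ℕ → ℕ) (hf : MemFJA J l A f)
    (I : ℕ → ℕ) (hI : IsIntervalPartition I) :
    DensityZero (ZSet I J f) := by
  have hJ' := hJ
  have hI' := hI
  obtain ⟨hJ0, hJm⟩ := hJ
  obtain ⟨hI0, hIm⟩ := hI
  rw [DensityZero, NormedAddCommGroup.tendsto_nhds_zero]
  intro ε hε
  obtain ⟨L₀, hL₀⟩ := pow_unbounded_of_one_lt (6/ε) (by norm_num : (1:ℝ) < 2)
  set L := max L₀ 1 with hLdef
  have hL1 : 1 ≤ L := le_max_right _ _
  have h2L : (6/ε : ℝ) < 2^L :=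
    lt_of_lt_of_le hL₀ (pow_le_pow_right₀ (by norm_num) (le_max_left _ _))
  have h2Lpos : (0:ℝ) < 2^L := by positivity
  have hLε : (3:ℝ)/2^L < ε/2 := by
    rw [div_lt_div_iff₀ h2Lpos (by norm_num)]
    rw [div_lt_iff₀ hε] at h2L
    nlinarith
  set C := J (I L) with hC
  have htend : Tendsto (fun n : ℕ => (ε/2) * n) atTop atTop :=
    Tendsto.const_mul_atTop (half_pos hε) tendsto_natCast_atTop_atTop
  filter_upwards [htend.eventually_gt_atTop ((C:ℝ)+1), eventually_ge_atTop C,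
    eventually_ge_atTop 1] with n hn1 hn2 hn3
  have hn0 : (0:ℝ) < n := by exact_mod_cast Nat.lt_of_lt_of_le Nat.zero_lt_one hn3
  set K := idx J n with hK
  have hJK : J K ≤ n := I_idx_le J hJ' n
  have hJK2 : n < J (K+1) := lt_I_idx_succ J hJ' n
  have hILK : I L ≤ K := le_idx J hJ' hn2
  set t := idx I K with ht
  have htL : L ≤ t := le_idx I hI' hILK
  have htK : t ≤ K := idx_le I K
  have htlK : t ≤ l K := le_trans htK (hl K).2.1
  -- window bound
  obtain ⟨ρ, hρlen, hρ⟩ := nested J l A hA f hf K t htlK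
  have hZK : ∀ m ∈ ZSet I J f ∩ Set.Ico (J K) n, m ∈ A K ρ := by
    intro m hm
    apply hρ
    have hm2 : m ∈ Set.Ico (J K) (J (K+1)) := ⟨hm.2.1, lt_trans hm.2.2 hJK2⟩
    exact Z_inter I J f hI' hJ' K ⟨hm.1, hm2⟩
  have hWcount : (ZSet I J f ∩ Set.Ico (J K) n).ncard ≤ (n - J K)/(2^(t-1)+1) + 1 := by
    apply count_sep _ (J K) n _ (Nat.succ_pos _) Set.inter_subset_right
    intro i hi j hj hij
    have hiA := hZK i hi
    have hjA := hZK j hj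
    have hsep := (hA K).2.2.2 ρ (by rw [hρlen]; exact htlK) i hiA j hjA (by omega)
    rw [hρlen] at hsep
    have hcast : ((t:ℤ) - 1) = ((t - 1 : ℕ) : ℤ) := by omega
    rw [hcast, zpow_natCast] at hsep
    have hle : (i:ℝ) ≤ j := Nat.cast_le.mpr hij.le
    rw [abs_sub_comm, abs_of_nonneg (by linarith)] at hsep
    have h8 : ((2^(t-1) : ℕ) : ℝ) < ((j - i : ℕ) : ℝ) := by
      push_cast [Nat.cast_sub hij.le]
      exact_mod_cast hsep
    have h9 : 2^(t-1) < j - i := Nat.cast_lt.mp h8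
    omega
  -- middle bound
  have hmid : ∀ j ∈ Finset.Ico (I L) K,
      (ZSet I J f ∩ Set.Ico (J j) (J (j+1))).ncard ≤ 2^(l j - idx I j) := by
    intro j hj
    have hjl : idx I j ≤ l j := le_trans (idx_le I j) (hl j).2.1
    obtain ⟨ρj, hρjlen, hρj⟩ := nested J l A hA f hf j (idx I j) hjl
    have h1 : ZSet I J f ∩ Set.Ico (J j) (J (j+1)) ⊆ A j ρj :=
      fun m hm => hρj (Z_inter I J f hI' hJ' j hm)
    calc (ZSet I J f ∩ Set.Ico (J j) (J (j+1))).ncard ≤ (A j ρj).ncard :=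
          Set.ncard_le_ncard h1
            ((Set.finite_Ico _ _).subset (A_subset_Ico J l A hA j ρj (by omega)))
      _ = 2^(l j - idx I j) := by
          rw [(hA j).2.1 ρj (by omega), hρjlen]
  set S := ∑ j ∈ Finset.Ico (I L) K, 2^(l j - idx I j) with hS
  have hSsum : 2^L * S ≤ n := by
    calc 2^L * S = ∑ j ∈ Finset.Ico (I L) K, 2^L * 2^(l j - idx I j) := Finset.mul_sum _ _ _
      _ ≤ ∑ j ∈ Finset.Ico (I L) K, (J (j+1) - J j) := by
          apply Finset.sum_le_sum
          intro j hj
          rw [Finset.mem_Ico] at hj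
          have h1 : L ≤ idx I j := le_idx I hI' hj.1
          have h2 : idx I j ≤ l j := le_trans (idx_le I j) (hl j).2.1
          rw [← pow_add, (hl j).2.2]
          exact Nat.pow_le_pow_right (by norm_num) (by omega)
      _ ≤ ∑ j ∈ Finset.range K, (J (j+1) - J j) := by
          apply Finset.sum_le_sum_of_subset
          intro x hx
          rw [Finset.mem_Ico] at hx
          rw [Finset.mem_range]
          omega
      _ = J K - J 0 := Finset.sum_range_tsub hJm.monotone K
      _ ≤ n := by omega
  -- decomposition
  have hfinpieces : ∀ j : ℕ, (ZSet I J f ∩ Set.Ico (J j) (J (j+1))).Finite :=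
    fun j => (Set.finite_Ico _ _).subset Set.inter_subset_right
  have hsplit : ZSet I J f ∩ Set.Iio n ⊆ (Set.Iio C) ∪
      ((⋃ j ∈ Finset.Ico (I L) K, ZSet I J f ∩ Set.Ico (J j) (J (j+1))) ∪
        (ZSet I J f ∩ Set.Ico (J K) n)) := by
    intro m hm
    obtain ⟨hmZ, hmn⟩ := hm
    rw [Set.mem_Iio] at hmn
    rcases lt_or_ge m C with h | h
    · exact Or.inl h
    · right
      have h1 : J (idx J m) ≤ m := I_idx_le J hJ' m
      have h2 : m < J (idx J m + 1) := lt_I_idx_succ J hJ' m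
      have h3 : I L ≤ idx J m := le_idx J hJ' h
      have h4 : idx J m ≤ K := by
        by_contra hcon
        push_neg at hcon
        have := hJm.monotone (show K + 1 ≤ idx J m by omega)
        omega
      rcases eq_or_lt_of_le h4 with he | hlt
      · refine Or.inr ⟨hmZ, ?_, hmn⟩
        rw [← he]
        exact h1
      · exact Or.inl (Set.mem_biUnion (Finset.mem_Ico.mpr ⟨h3, hlt⟩) ⟨hmZ, h1, h2⟩)
  have hcard : (ZSet I J f ∩ Set.Iio n).ncard ≤ C + (S + ((n - J K)/(2^(t-1)+1) + 1)) := by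
    have hfin : ((Set.Iio C) ∪
        ((⋃ j ∈ Finset.Ico (I L) K, ZSet I J f ∩ Set.Ico (J j) (J (j+1))) ∪
          (ZSet I J f ∩ Set.Ico (J K) n))).Finite := by
      refine (Set.finite_Iio _).union (Set.Finite.union ?_ ?_)
      · exact Set.Finite.biUnion (Finset.finite_toSet _) (fun j _ => hfinpieces j)
      · exact (Set.finite_Ico _ _).subset Set.inter_subset_right
    calc (ZSet I J f ∩ Set.Iio n).ncard ≤ _ := Set.ncard_le_ncard hsplit hfin
      _ ≤ (Set.Iio C).ncard +
          ((⋃ j ∈ Finset.Ico (I L) K, ZSet I J f ∩ Set.Ico (J j) (J (j+1))) ∪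
            (ZSet I J f ∩ Set.Ico (J K) n)).ncard := Set.ncard_union_le _ _
      _ ≤ C + (S + ((n - J K)/(2^(t-1)+1) + 1)) := by
          rw [ncard_Iio]
          gcongr
          calc ((⋃ j ∈ Finset.Ico (I L) K, ZSet I J f ∩ Set.Ico (J j) (J (j+1))) ∪
            (ZSet I J f ∩ Set.Ico (J K) n)).ncard
              ≤ (⋃ j ∈ Finset.Ico (I L) K, ZSet I J f ∩ Set.Ico (J j) (J (j+1))).ncard +
                (ZSet I J f ∩ Set.Ico (J K) n).ncard := Set.ncard_union_le _ _
            _ ≤ S + ((n - J K)/(2^(t-1)+1) + 1) :=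
                Nat.add_le_add (le_trans (ncard_biUnion_le _ _) (Finset.sum_le_sum hmid)) hWcount
  -- real estimate
  have hW2 : (n - J K)/(2^(t-1)+1) ≤ n / 2^(L-1) := by
    calc (n - J K)/(2^(t-1)+1) ≤ n/(2^(t-1)+1) := Nat.div_le_div_right (by omega)
      _ ≤ n / 2^(L-1) := Nat.div_le_div_left
          (le_trans (Nat.pow_le_pow_right (by norm_num) (by omega)) (Nat.le_succ _))
          (Nat.pow_pos (by norm_num))
  have hcard2 : (ZSet I J f ∩ Set.Iio n).ncard ≤ C + 1 + S + n / 2^(L-1) := by omega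
  have hSr : (S:ℝ) ≤ (n:ℝ)/2^L := by
    rw [le_div_iff₀ h2Lpos]
    calc (S:ℝ) * 2^L = ((2^L * S : ℕ) : ℝ) := by push_cast; ring
      _ ≤ (n:ℝ) := Nat.cast_le.mpr hSsum
  have hWr : ((n / 2^(L-1) : ℕ) : ℝ) ≤ 2 * ((n:ℝ)/2^L) := by
    calc ((n / 2^(L-1) : ℕ) : ℝ) ≤ (n:ℝ)/(2^(L-1):ℕ) := Nat.cast_div_le
      _ = 2 * ((n:ℝ)/2^L) := by
          have h5 : (2:ℝ)^L = 2^(L-1) * 2 := by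
            rw [← pow_succ]
            congr 1
            omega
          push_cast
          rw [h5]
          field_simp
  have hfinal : ((ZSet I J f ∩ Set.Iio n).ncard : ℝ) / n ≤ ((C:ℝ)+1)/n + 3/2^L := by
    have h6 : ((ZSet I J f ∩ Set.Iio n).ncard : ℝ) ≤ (C:ℝ) + 1 + 3 * ((n:ℝ)/2^L) := by
      calc ((ZSet I J f ∩ Set.Iio n).ncard : ℝ) ≤ ((C + 1 + S + n / 2^(L-1) : ℕ) : ℝ) :=
            Nat.cast_le.mpr hcard2
        _ = (C:ℝ) + 1 + (S:ℝ) + ((n / 2^(L-1) : ℕ) : ℝ) := by push_cast; ring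
        _ ≤ (C:ℝ) + 1 + (n:ℝ)/2^L + 2 * ((n:ℝ)/2^L) := by linarith
        _ = (C:ℝ) + 1 + 3 * ((n:ℝ)/2^L) := by ring
    have heq2 : 3 * ((n:ℝ)/2^L) / n = 3/2^L := by
      rw [mul_div_assoc, div_div, mul_comm (2^L : ℝ) (n:ℝ), ← div_div,
        div_self (ne_of_gt hn0), one_div, mul_comm]
      rw [division_def, mul_comm]
    calc ((ZSet I J f ∩ Set.Iio n).ncard : ℝ) / n
        ≤ ((C:ℝ) + 1 + 3 * ((n:ℝ)/2^L))/n := by gcongr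
      _ = ((C:ℝ)+1)/n + 3 * ((n:ℝ)/2^L)/n := add_div _ _ _
      _ = ((C:ℝ)+1)/n + 3/2^L := by rw [heq2]
  have hgoal : ((ZSet I J f ∩ Set.Iio n).ncard : ℝ) / n < ε := by
    have h7 : ((C:ℝ)+1)/n < ε/2 := by
      rw [div_lt_iff₀ hn0]
      linarith
    linarith
  rw [Real.norm_eq_abs, abs_of_nonneg (by positivity)]
  exact hgoal
end

section
/- Suppose F is a family of infinite subsets of ℕ of cardinality less than 𝔯. Then there exists a single sequence X = ⟨x_k : k < ω⟩ of subsets of ℕ such that X promptly splits A for every A ∈ F. -/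
open Filter Set Cardinal

/-- The reaping number `𝔯`. -/
noncomputable def frakR : Cardinal :=
  sInf { κc : Cardinal | ∃ R : Set (Set ℕ), #R = κc ∧ (∀ a ∈ R, a.Infinite) ∧
    ∀ x : Set ℕ, ∃ a ∈ R, (a \ x).Finite ∨ (a ∩ x).Finite }

/-- `x⁰ = x` and `x¹ = ℕ \ x`, with `false` coding `0` and `true` coding `1`. -/
def SideOf (x : Set ℕ) (b : Bool) : Set ℕ := if b then xᶜ else x

/-- A sequence `X = ⟨x_i : i < ω⟩` of subsets of `ℕ` promptly splits an infinite `a ⊆ ℕ`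
if for every `n` and every `σ : {0,…,n} → 2`, `(⋂_{i ≤ n} x_i^{σ(i)}) ∩ a` is infinite. -/
def PromptlySplits (X : ℕ → Set ℕ) (a : Set ℕ) : Prop :=
  ∀ (n : ℕ) (σ : ℕ → Bool),
    ((⋂ i ∈ Finset.range (n + 1), SideOf (X i) (σ i)) ∩ a).Infinite


/-- Next element of `a` above `m`. -/
noncomputable def nxt (a : Set ℕ) (m : ℕ) : ℕ := sInf {k | k ∈ a ∧ m < k}

lemma nxt_spec {a : Set ℕ} (ha : a.Infinite) (m : ℕ) : nxt a m ∈ a ∧ m < nxt a m := by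
  obtain ⟨b, hb, hmb⟩ := ha.exists_gt m
  exact Nat.sInf_mem (⟨b, hb, hmb⟩ : {k | k ∈ a ∧ m < k}.Nonempty)

/-- Interval endpoints for the splitter construction. -/
noncomputable def tEnd (s : Finset (Set ℕ)) : ℕ → ℕ
  | 0 => 0
  | j + 1 => (s.sup fun a => nxt a (tEnd s j)) + tEnd s j + 1

lemma tEnd_mono (s : Finset (Set ℕ)) : StrictMono (tEnd s) :=
  strictMono_nat_of_lt_succ (fun j => by rw [tEnd]; omega)

/-- A finite family of infinite sets has a common splitter. -/
lemma exists_splitter_finite (R : Set (Set ℕ)) (hfin : R.Finite)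
    (hinf : ∀ a ∈ R, a.Infinite) :
    ∃ x : Set ℕ, ∀ a ∈ R, (a \ x).Infinite ∧ (a ∩ x).Infinite := by
  classical
  set s : Finset (Set ℕ) := hfin.toFinset with hs
  set t : ℕ → ℕ := tEnd s with ht
  have htmono : StrictMono t := tEnd_mono s
  have hkey : ∀ a ∈ R, ∀ j, nxt a (t j) ∈ a ∧ t j < nxt a (t j) ∧ nxt a (t j) < t (j + 1) := by
    intro a ha j
    obtain ⟨h1, h2⟩ := nxt_spec (hinf a ha) (t j)
    refine ⟨h1, h2, ?_⟩
    have : nxt a (t j) ≤ s.sup fun a => nxt a (t j) :=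
      Finset.le_sup (f := fun a => nxt a (t j)) (hfin.mem_toFinset.2 ha)
    have : t (j+1) = (s.sup fun a => nxt a (t j)) + t j + 1 := rfl
    omega
  refine ⟨{m | ∃ j, Even j ∧ t j ≤ m ∧ m < t (j + 1)}, fun a ha => ?_⟩
  have hdisj : ∀ {i j b : ℕ}, t i ≤ b → b < t (i+1) → t j ≤ b → b < t (j+1) → i = j := by
    intro i j b h1 h2 h3 h4
    rcases lt_trichotomy i j with h | h | h
    · have := htmono.le_iff_le.2 (show i + 1 ≤ j from h); omega
    · exact h
    · have := htmono.le_iff_le.2 (show j + 1 ≤ i from h); omega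
  constructor
  · -- a \ x infinite, using odd intervals
    apply Set.infinite_of_forall_exists_gt
    intro N
    refine ⟨nxt a (t (2 * N + 1)), ⟨(hkey a ha (2*N+1)).1, ?_⟩, ?_⟩
    · rintro ⟨j, hj, hj1, hj2⟩
      obtain ⟨-, h2, h3⟩ := hkey a ha (2 * N + 1)
      have heq := hdisj hj1 hj2 (le_of_lt h2) h3
      subst heq
      exact (Nat.not_even_iff_odd.2 ⟨N, by ring⟩) hj
    · have h2 := (hkey a ha (2 * N + 1)).2.1
      have := htmono.le_apply (x := 2 * N + 1)
      omega
  · apply Set.infinite_of_forall_exists_gt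
    intro N
    refine ⟨nxt a (t (2 * N + 2)), ⟨(hkey a ha (2*N+2)).1, ?_⟩, ?_⟩
    · exact ⟨2 * N + 2, ⟨N + 1, by ring⟩, le_of_lt (hkey a ha (2*N+2)).2.1, (hkey a ha (2*N+2)).2.2⟩
    · have h2 := (hkey a ha (2 * N + 2)).2.1
      have := htmono.le_apply (x := 2 * N + 2)
      omega


lemma aleph0_le_frakR : ℵ₀ ≤ frakR := by
  apply le_csInf
  · refine ⟨#{a : Set ℕ | a.Infinite}, {a : Set ℕ | a.Infinite}, rfl, fun a ha => ha, fun x => ?_⟩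
    by_cases hx : x.Infinite
    · exact ⟨x, hx, Or.inl (by simp)⟩
    · exact ⟨Set.univ, Set.infinite_univ, Or.inr ((Set.not_infinite.1 hx).subset (Set.inter_subset_right))⟩
  · rintro κ ⟨R, rfl, hinf, hreap⟩
    by_contra h
    have hfin : R.Finite := Cardinal.lt_aleph0_iff_set_finite.1 (lt_of_not_ge h)
    obtain ⟨x, hx⟩ := exists_splitter_finite R hfin hinf
    obtain ⟨a, ha, hcase⟩ := hreap x
    rcases hcase with h1 | h1
    · exact (hx a ha).1 h1
    · exact (hx a ha).2 h1

lemma exists_splitter_of_lt_frakR (R : Set (Set ℕ)) (hinf : ∀ a ∈ R, a.Infinite)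
    (hcard : #R < frakR) :
    ∃ x : Set ℕ, ∀ a ∈ R, (a \ x).Infinite ∧ (a ∩ x).Infinite := by
  by_contra h
  push_neg at h
  have : frakR ≤ #R := csInf_le' ⟨R, rfl, hinf, fun x => by
    obtain ⟨a, ha, hcase⟩ := h x
    refine ⟨a, ha, ?_⟩
    by_cases hd : (a \ x).Infinite
    · exact Or.inr (hcase hd)
    · exact Or.inl (Set.not_infinite.1 hd)⟩
  exact absurd hcard (not_lt.2 this)


/-- The family of Boolean-trace intersections at stage `n`. -/
def fam (F : Set (Set ℕ)) (Y : ℕ → Set ℕ) (n : ℕ) : Set (Set ℕ) :=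
  {s | ∃ a ∈ F, ∃ σ : ℕ → Bool, s = (⋂ i ∈ Finset.range n, SideOf (Y i) (σ i)) ∩ a}

lemma biInter_side_congr {Y Y' : ℕ → Set ℕ} {σ σ' : ℕ → Bool} {n : ℕ}
    (h : ∀ i < n, Y i = Y' i) (h' : ∀ i < n, σ i = σ' i) :
    (⋂ i ∈ Finset.range n, SideOf (Y i) (σ i)) = ⋂ i ∈ Finset.range n, SideOf (Y' i) (σ' i) := by
  apply Set.iInter₂_congr
  intro i hi
  rw [Finset.mem_range] at hi
  rw [h i hi, h' i hi]

lemma fam_congr {F : Set (Set ℕ)} {Y Y' : ℕ → Set ℕ} {n : ℕ} (h : ∀ i < n, Y i = Y' i) :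
    fam F Y n = fam F Y' n := by
  unfold fam
  ext s
  constructor
  · rintro ⟨a, ha, σ, rfl⟩
    exact ⟨a, ha, σ, by rw [biInter_side_congr h (fun i _ => rfl)]⟩
  · rintro ⟨a, ha, σ, rfl⟩
    exact ⟨a, ha, σ, by rw [biInter_side_congr (fun i hi => (h i hi).symm) (fun i _ => rfl)]⟩

lemma fam_card_lt {F : Set (Set ℕ)} (Y : ℕ → Set ℕ) (n : ℕ) (hF : #F < frakR) :
    #(fam F Y n) < frakR := by
  classical
  have hrange : fam F Y n ⊆ Set.range (fun p : ↥F × (Fin n → Bool) =>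
      (⋂ i ∈ Finset.range n, SideOf (Y i) (if h : i < n then p.2 ⟨i, h⟩ else false)) ∩ (p.1 : Set ℕ)) := by
    rintro s ⟨a, ha, σ, rfl⟩
    refine ⟨⟨⟨a, ha⟩, fun i => σ i⟩, ?_⟩
    simp only
    congr 1
    apply Set.iInter₂_congr
    intro i hi
    rw [Finset.mem_range] at hi
    rw [dif_pos hi]
  calc #(fam F Y n) ≤ #(↥F × (Fin n → Bool)) :=
        le_trans (Cardinal.mk_le_mk_of_subset hrange) Cardinal.mk_range_le
    _ = #F * #(Fin n → Bool) := by simp [Cardinal.mk_prod]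
    _ < frakR := Cardinal.mul_lt_of_lt aleph0_le_frakR hF
        (lt_of_lt_of_le (Cardinal.lt_aleph0_of_finite _) aleph0_le_frakR)

open Classical in
noncomputable def pick (F : Set (Set ℕ)) (Y : ℕ → Set ℕ) (n : ℕ) : Set ℕ :=
  if h : ∃ x : Set ℕ, ∀ s ∈ fam F Y n, (s \ x).Infinite ∧ (s ∩ x).Infinite then h.choose else ∅

noncomputable def seqAux (F : Set (Set ℕ)) : ℕ → (ℕ → Set ℕ)
  | 0 => fun _ => ∅
  | n + 1 => Function.update (seqAux F n) n (pick F (seqAux F n) n)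

noncomputable def XX (F : Set (Set ℕ)) : ℕ → Set ℕ := fun n => seqAux F (n + 1) n

lemma seqAux_coh (F : Set (Set ℕ)) : ∀ n, ∀ i < n, seqAux F n i = XX F i := by
  intro n
  induction n with
  | zero => intro i hi; omega
  | succ n ih =>
    intro i hi
    rcases Nat.lt_succ_iff_lt_or_eq.1 hi with h | rfl
    · rw [seqAux, Function.update_of_ne (by omega), ih i h]
    · rfl

lemma XX_eq (F : Set (Set ℕ)) (n : ℕ) : XX F n = pick F (XX F) n := by
  have h1 : XX F n = pick F (seqAux F n) n := by
    show seqAux F (n+1) n = _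
    rw [seqAux, Function.update_self]
  rw [h1, pick, pick, fam_congr (Y := seqAux F n) (Y' := XX F) (seqAux_coh F n)]

lemma fam_infinite (F : Set (Set ℕ)) (hinf : ∀ a ∈ F, a.Infinite) (hcard : #F < frakR) :
    ∀ n, ∀ s ∈ fam F (XX F) n, s.Infinite := by
  intro n
  induction n with
  | zero =>
    rintro s ⟨a, ha, σ, rfl⟩
    simpa using hinf a ha
  | succ n ih =>
    rintro s ⟨a, ha, σ, rfl⟩
    have hex : ∃ x : Set ℕ, ∀ s ∈ fam F (XX F) n, (s \ x).Infinite ∧ (s ∩ x).Infinite :=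
      exists_splitter_of_lt_frakR _ ih (fam_card_lt _ n hcard)
    have hXn : ∀ s ∈ fam F (XX F) n, (s \ XX F n).Infinite ∧ (s ∩ XX F n).Infinite := by
      rw [XX_eq, pick, dif_pos hex]
      exact hex.choose_spec
    have hmem : (⋂ i ∈ Finset.range n, SideOf (XX F i) (σ i)) ∩ a ∈ fam F (XX F) n :=
      ⟨a, ha, σ, rfl⟩
    have hsplit := hXn _ hmem
    have hre : (⋂ i ∈ Finset.range (n+1), SideOf (XX F i) (σ i)) ∩ a =
        ((⋂ i ∈ Finset.range n, SideOf (XX F i) (σ i)) ∩ a) ∩ SideOf (XX F n) (σ n) := by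
      rw [Finset.range_add_one, Finset.set_biInter_insert]
      ext m
      simp only [Set.mem_inter_iff, Set.mem_iInter]
      tauto
    rw [hre]
    cases hσ : σ n with
    | false =>
      have : SideOf (XX F n) false = XX F n := rfl
      rw [this]
      exact hsplit.2
    | true =>
      have : ∀ t : Set ℕ, t ∩ SideOf (XX F n) true = t \ XX F n := fun t => by
        simp [SideOf, Set.diff_eq]
      rw [this]
      exact hsplit.1


/-- Any family of fewer than `𝔯` many infinite subsets of `ℕ` is simultaneously
promptly split by a single sequence of subsets of `ℕ`. -/
theorem stmt15 (F : Set (Set ℕ)) (hinf : ∀ a ∈ F, a.Infinite) (hcard : #F < frakR) :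
    ∃ X : ℕ → Set ℕ, ∀ a ∈ F, PromptlySplits X a := by
  refine ⟨XX F, fun a ha n σ => ?_⟩
  exact fam_infinite F hinf hcard (n + 1) _ ⟨a, ha, σ, rfl⟩
end
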